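/- Let F be a linear combination of Schur polynomials in m variables satisfying: (a) for each degree d, the support of the sum of terms of degree d equals the union of the supports of the Schur polynomials appearing in that degree, and (b) in each degree the partitions appearing have a unique dominance-maximum, and these maxima form a chain alpha = lambda^0 < lambda^1 < ... < lambda^l = beta where each lambda^i is obtained from lambda^{i-1} by adding one box in the northmost possible row. Then F has saturated Newton polytope. -/

import Mathlib

open Finset Pointwise

/-- The Young diagram of a partition with at most `m` parts given as an antitone map. -/
def diagramOf {m : ℕ} (lam : Fin m → ℕ) (h : Antitone lam) : YoungDiagram where
  cells := Finset.univ.biUnion fun i : Fin m =>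
    (Finset.range (lam i)).image fun j => ((i : ℕ), j)
  isLowerSet := by
    rintro ⟨i₁, j₁⟩ ⟨i₂, j₂⟩ ⟨hi, hj⟩ hm
    simp only [Finset.coe_biUnion, Finset.coe_univ, Set.mem_iUnion, Finset.mem_coe,
      Finset.mem_image, Finset.mem_range, Set.mem_univ, true_and, Set.iUnion_true] at hm ⊢
    obtain ⟨i, j, hj', hij⟩ := hm
    have hi1 : (i₁ : ℕ) = (i : ℕ) := ((Prod.mk.injEq _ _ _ _).mp hij).1.symm
    have hj1 : j₁ = j := ((Prod.mk.injEq _ _ _ _).mp hij).2.symm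
    have hi2m : i₂ < m := lt_of_le_of_lt (le_of_le_of_eq hi hi1) i.isLt
    refine ⟨⟨i₂, hi2m⟩, j₂, ?_, rfl⟩
    have : lam i ≤ lam ⟨i₂, hi2m⟩ := h (by simpa [Fin.le_def] using le_of_le_of_eq hi hi1)
    omega

/-- The content of a tableau: the number of cells with entry `e`. -/
def content (μ : YoungDiagram) (T : SemistandardYoungTableau μ) (e : ℕ) : ℕ :=
  (μ.cells.filter fun c => T c.1 c.2 = e).card

/-- The coefficient of `x^α` in the Schur polynomial `s_μ(x_1, …, x_m)`: the number of
semistandard Young tableaux of shape `μ` with entries in `{0, …, m-1}` and content `α`. -/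
noncomputable def schurCoeff (m : ℕ) (μ : YoungDiagram) (α : Fin m → ℕ) : ℕ :=
  Nat.card {T : SemistandardYoungTableau μ // (∀ i j : ℕ, (i, j) ∈ μ → T i j < m) ∧
    ∀ k : Fin m, content μ T (k : ℕ) = α k}

/-- The Schur polynomial, viewed as its coefficient function. -/
noncomputable def schurR (m : ℕ) (μ : YoungDiagram) : (Fin m → ℕ) → ℝ :=
  fun α => (schurCoeff m μ α : ℝ)

/-- The support of a polynomial (given by its coefficient function), as a set of points of `ℝ^m`. -/
def Supp {m : ℕ} (F : (Fin m → ℕ) → ℝ) : Set (Fin m → ℝ) :=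
  {x | ∃ α : Fin m → ℕ, F α ≠ 0 ∧ x = fun i => (α i : ℝ)}

/-- The Newton polytope of a polynomial. -/
def NewtonP {m : ℕ} (F : (Fin m → ℕ) → ℝ) : Set (Fin m → ℝ) :=
  convexHull ℝ (Supp F)

/-- A lattice point of `ℝ^m`. -/
def IsLattice {m : ℕ} (x : Fin m → ℝ) : Prop := ∀ i, ∃ z : ℤ, x i = z

/-- Saturated Newton polytope. -/
def HasSNP {m : ℕ} (F : (Fin m → ℕ) → ℝ) : Prop :=
  NewtonP F ∩ {x | IsLattice x} = Supp F

/-- Integer decomposition property of a subset of `ℝ^m`. -/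
def HasIDP {m : ℕ} (P : Set (Fin m → ℝ)) : Prop :=
  ∀ t : ℕ, 0 < t → ∀ p ∈ (t : ℝ) • P, IsLattice p →
    ∃ v : Fin t → (Fin m → ℝ), (∀ j, v j ∈ P ∧ IsLattice (v j)) ∧ p = ∑ j, v j

/-- `b` dominates `a`: every partial sum of `b` is at least that of `a`. -/
def Dominates {m : ℕ} (a b : Fin m → ℕ) : Prop :=
  ∀ j : Fin m, ∑ i ∈ Finset.univ.filter (· ≤ j), a i ≤ ∑ i ∈ Finset.univ.filter (· ≤ j), b i

/-- The `S_m`-orbit of a point of `ℕ^m`, as a subset of `ℝ^m`. -/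
def orbitR {m : ℕ} (lam : Fin m → ℕ) : Set (Fin m → ℝ) :=
  {x | ∃ σ : Equiv.Perm (Fin m), x = fun i => (lam (σ i) : ℝ)}

/-- Add a box to row `r`. -/
def AddBoxAt {m : ℕ} (ν : Fin m → ℕ) (r : Fin m) : Fin m → ℕ :=
  Function.update ν r (ν r + 1)

/-- `ν'` is obtained from `ν` by adding a box in the northmost row such that the result is
a partition that is at most `β`. -/
def NorthmostStep {m : ℕ} (β ν ν' : Fin m → ℕ) : Prop :=
  ∃ r : Fin m, ν' = AddBoxAt ν r ∧ Antitone ν' ∧ ν' ≤ β ∧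
    ∀ r' : Fin m, r' < r → ¬ (Antitone (AddBoxAt ν r') ∧ AddBoxAt ν r' ≤ β)

namespace SNPaux


/-- Young diagram from an antitone row-length function vanishing from `n` on. -/
def yd (f : ℕ → ℕ) (hf : Antitone f) (n : ℕ) (h0 : ∀ i, n ≤ i → f i = 0) : YoungDiagram where
  cells := ((Finset.range n) ×ˢ (Finset.range (f 0 + 1))).filter fun c => c.2 < f c.1
  isLowerSet := by
    rintro ⟨i1, j1⟩ ⟨i2, j2⟩ ⟨hi, hj⟩ hm
    simp only [Finset.coe_filter, Finset.mem_product, Finset.mem_range, Set.mem_setOf_eq] at hm ⊢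
    obtain ⟨⟨h1, h2⟩, h3⟩ := hm
    have h4 : f i1 ≤ f i2 := hf hi
    have h5 : f i2 ≤ f 0 := hf (Nat.zero_le _)
    have h6 : i2 < n := by
      by_contra hn
      have := h0 i2 (le_of_not_gt hn); omega
    exact ⟨⟨h6, by omega⟩, by omega⟩

theorem mem_yd {f : ℕ → ℕ} {hf : Antitone f} {n : ℕ} {h0 : ∀ i, n ≤ i → f i = 0} {i j : ℕ} :
    (i, j) ∈ yd f hf n h0 ↔ j < f i := by
  constructor
  · intro h
    exact (by simpa [yd, ← YoungDiagram.mem_cells, YoungDiagram.mem_mk, Finset.mem_filter] using h :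
      (i < n ∧ j < f 0 + 1) ∧ j < f i).2
  · intro h
    have hin : i < n := by
      by_contra hn
      have := h0 i (le_of_not_gt hn); omega
    have : j < f 0 + 1 := by have := hf (Nat.zero_le i); omega
    simp [yd, ← YoungDiagram.mem_cells, YoungDiagram.mem_mk, Finset.mem_filter, Finset.mem_product, Finset.mem_range, hin,
      this, h]

theorem rowLen_yd {f : ℕ → ℕ} {hf : Antitone f} {n : ℕ} {h0 : ∀ i, n ≤ i → f i = 0} (i : ℕ) :
    (yd f hf n h0).rowLen i = f i := by
  have key : ∀ j : ℕ, ((i, j) ∈ yd f hf n h0) ↔ j < f i := fun _ => mem_yd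
  rcases Nat.lt_trichotomy ((yd f hf n h0).rowLen i) (f i) with h | h | h
  · have h2 := YoungDiagram.mem_iff_lt_rowLen.mp ((key _).mpr h)
    omega
  · exact h
  · have := (key _).mp (YoungDiagram.mem_iff_lt_rowLen.mpr h)
    omega

theorem card_yd {f : ℕ → ℕ} {hf : Antitone f} {n : ℕ} {h0 : ∀ i, n ≤ i → f i = 0} :
    (yd f hf n h0).cells.card = ∑ i ∈ Finset.range n, f i := by
  classical
  rw [Finset.card_eq_sum_card_fiberwise (f := Prod.fst) (t := Finset.range n)]
  · refine Finset.sum_congr rfl fun i hi => ?_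
    have : (yd f hf n h0).cells.filter (fun c => c.1 = i) =
        (Finset.range (f i)).image (fun j => (i, j)) := by
      ext ⟨a, b⟩
      simp only [Finset.mem_filter, Finset.mem_image, Finset.mem_range, YoungDiagram.mem_cells]
      constructor
      · rintro ⟨hm, rfl⟩
        exact ⟨b, mem_yd.mp hm, rfl⟩
      · rintro ⟨j, hj, h⟩
        injection h with h1 h2
        subst h1; subst h2
        exact ⟨mem_yd.mpr hj, rfl⟩
    rw [this, Finset.card_image_of_injective _ (fun a b hab => (Prod.mk.injEq .. ▸ hab).2),
      Finset.card_range]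
  · intro c hc
    rw [Finset.mem_coe, YoungDiagram.mem_cells] at hc
    obtain ⟨a, b⟩ := c
    have := mem_yd.mp hc
    simp only [Finset.mem_coe, Finset.mem_range]
    by_contra hn
    have := h0 a (le_of_not_gt hn)
    omega



theorem snd_mem_aux (μ : YoungDiagram) (P : ℕ × ℕ → Prop) [DecidablePred P] :
    ∀ c ∈ μ.cells.filter P, Prod.snd c ∈ Finset.range (μ.rowLen 0) := by
  rintro ⟨a, b⟩ hc
  have hm : (a, b) ∈ μ := (Finset.mem_filter.mp hc).1
  have h1 : b < μ.rowLen a := YoungDiagram.mem_iff_lt_rowLen.mp hm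
  have h2 := μ.rowLen_anti 0 a (Nat.zero_le _)
  exact Finset.mem_range.mpr (lt_of_lt_of_le h1 h2)

theorem content_sum (μ : YoungDiagram) (T : SemistandardYoungTableau μ) (S : Finset ℕ) :
    ∑ e ∈ S, content μ T e = (μ.cells.filter fun c => T c.1 c.2 ∈ S).card := by
  classical
  have h := Finset.card_eq_sum_card_fiberwise
    (s := μ.cells.filter fun c => T c.1 c.2 ∈ S) (f := fun c => T c.1 c.2) (t := S)
    (fun c hc => (Finset.mem_filter.mp hc).2)
  rw [h]
  refine Finset.sum_congr rfl fun e he => ?_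
  unfold content
  congr 1
  rw [Finset.filter_filter]
  apply Finset.filter_congr
  intro c hc
  exact ⟨fun h => ⟨h ▸ he, h⟩, fun h => h.2⟩

theorem card_filter_fst_lt (μ : YoungDiagram) (k : ℕ) :
    (μ.cells.filter fun c => c.1 < k).card = ∑ r ∈ Finset.range k, μ.rowLen r := by
  classical
  have h := Finset.card_eq_sum_card_fiberwise
    (s := μ.cells.filter fun c => c.1 < k) (f := Prod.fst) (t := Finset.range k)
    (fun c hc => Finset.mem_range.mpr (Finset.mem_filter.mp hc).2)
  rw [h]
  refine Finset.sum_congr rfl fun r hr => ?_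
  have : (μ.cells.filter fun c => c.1 < k).filter (fun c => c.1 = r) =
      (Finset.range (μ.rowLen r)).image fun j => (r, j) := by
    ext ⟨a, b⟩
    simp only [Finset.mem_filter, Finset.mem_image, Finset.mem_range, YoungDiagram.mem_cells]
    constructor
    · rintro ⟨⟨hm, _⟩, rfl⟩
      exact ⟨b, YoungDiagram.mem_iff_lt_rowLen.mp hm, rfl⟩
    · rintro ⟨j, hj, h⟩
      injection h with h1 h2
      subst h1; subst h2
      exact ⟨⟨YoungDiagram.mem_iff_lt_rowLen.mpr hj, Finset.mem_range.mp hr⟩, rfl⟩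
  rw [this, Finset.card_image_of_injective _ (fun a b hab => (Prod.mk.injEq .. ▸ hab).2),
    Finset.card_range]

/-- Column count of entries lying in `S` is at most `min |S| (colLen j)`. -/
theorem col_count_le (μ : YoungDiagram) (T : SemistandardYoungTableau μ) (S : Finset ℕ) (j : ℕ) :
    (μ.cells.filter fun c => (T c.1 c.2 ∈ S) ∧ c.2 = j).card ≤ min S.card (μ.colLen j) := by
  classical
  refine le_min ?_ ?_
  · refine Finset.card_le_card_of_injOn (fun c => T c.1 c.2)
      (fun c hc => (Finset.mem_filter.mp hc).2.1) ?_
    rintro ⟨a1, b1⟩ h1 ⟨a2, b2⟩ h2 he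
    simp only [Finset.coe_filter, Set.mem_setOf_eq, YoungDiagram.mem_cells] at h1 h2
    obtain ⟨hm1, -, hb1⟩ := h1
    obtain ⟨hm2, -, hb2⟩ := h2
    have hb : b2 = b1 := hb2.trans hb1.symm
    subst hb
    have he' : T a1 b2 = T a2 b2 := he
    rcases Nat.lt_trichotomy a1 a2 with hlt | heq | hgt
    · have := T.col_strict hlt hm2; omega
    · simp [heq]
    · have := T.col_strict hgt hm1; omega
  · calc _ ≤ (μ.col j).card := by
            refine Finset.card_le_card ?_
            intro c hc
            simp only [Finset.mem_filter] at hc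
            rw [YoungDiagram.mem_col_iff]
            exact ⟨hc.1, hc.2.2⟩
      _ = μ.colLen j := (μ.colLen_eq_card).symm

theorem col_count_eq (μ : YoungDiagram) (k : ℕ) (j : ℕ) :
    (μ.cells.filter fun c => c.1 < k ∧ c.2 = j).card = min k (μ.colLen j) := by
  classical
  have : (μ.cells.filter fun c => c.1 < k ∧ c.2 = j) =
      (Finset.range (min k (μ.colLen j))).image fun i => (i, j) := by
    ext ⟨a, b⟩
    simp only [Finset.mem_filter, Finset.mem_image, Finset.mem_range, YoungDiagram.mem_cells,
      lt_min_iff]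
    constructor
    · rintro ⟨hm, hk, rfl⟩
      exact ⟨a, ⟨hk, YoungDiagram.mem_iff_lt_colLen.mp hm⟩, rfl⟩
    · rintro ⟨i, ⟨hik, hicol⟩, h⟩
      injection h with h1 h2
      subst h1; subst h2
      exact ⟨YoungDiagram.mem_iff_lt_colLen.mpr hicol, hik, rfl⟩
  rw [this, Finset.card_image_of_injective _ (fun a b hab => (Prod.mk.injEq .. ▸ hab).1),
    Finset.card_range]

/-- Key dominance inequality from the existence of an SSYT. -/
theorem dom_of_ssyt (μ : YoungDiagram) (T : SemistandardYoungTableau μ) (S : Finset ℕ) :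
    ∑ e ∈ S, content μ T e ≤ ∑ r ∈ Finset.range S.card, μ.rowLen r := by
  classical
  rw [content_sum, ← card_filter_fst_lt]
  have hL := Finset.card_eq_sum_card_fiberwise
    (s := μ.cells.filter fun c => T c.1 c.2 ∈ S) (f := Prod.snd)
    (t := Finset.range (μ.rowLen 0)) (snd_mem_aux μ _)
  have hR := Finset.card_eq_sum_card_fiberwise
    (s := μ.cells.filter fun c => c.1 < S.card) (f := Prod.snd)
    (t := Finset.range (μ.rowLen 0)) (snd_mem_aux μ _)
  rw [hL, hR]
  refine Finset.sum_le_sum fun j _ => ?_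
  rw [Finset.filter_filter, Finset.filter_filter]
  calc (μ.cells.filter fun c => (T c.1 c.2 ∈ S) ∧ c.2 = j).card
      ≤ min S.card (μ.colLen j) := col_count_le μ T S j
    _ = (μ.cells.filter fun c => c.1 < S.card ∧ c.2 = j).card := (col_count_eq μ S.card j).symm



theorem sum_f' (x : ℕ) (f : ℕ → ℕ) (k : ℕ) :
    ∑ r ∈ Finset.range k, (f r - min x (f r) + min x (f (r + 1))) + min x (f 0)
      = ∑ r ∈ Finset.range k, f r + min x (f k) := by
  induction k with
  | zero => simp
  | succ k ih =>
    rw [Finset.sum_range_succ, Finset.sum_range_succ (f := f)]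
    have h1 : min x (f k) ≤ f k := min_le_right _ _
    omega

theorem exists_ssyt (m : ℕ) : ∀ (f : ℕ → ℕ) (hf : Antitone f) (h0 : ∀ i, m ≤ i → f i = 0)
    (α : ℕ → ℕ) (hα : ∀ i, m ≤ i → α i = 0)
    (hdom : ∀ S : Finset ℕ, ∑ i ∈ S, α i ≤ ∑ r ∈ Finset.range S.card, f r)
    (hsum : ∑ i ∈ Finset.range m, α i = ∑ i ∈ Finset.range m, f i),
    ∃ T : SemistandardYoungTableau (yd f hf m h0),
      (∀ i j : ℕ, (i, j) ∈ yd f hf m h0 → T i j < m) ∧ ∀ e, content _ T e = α e := by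
  induction m with
  | zero =>
    intro f hf h0 α hα hdom hsum
    have hcells : (yd f hf 0 h0).cells = ∅ := by
      ext ⟨i, j⟩
      simp only [Finset.notMem_empty, iff_false]
      intro hm
      have h1 := mem_yd.mp ((YoungDiagram.mem_cells _).mp hm)
      have := h0 i (Nat.zero_le _); omega
    refine ⟨⟨fun _ _ => 0, ?_, ?_, ?_⟩, ?_, ?_⟩
    · intro i j1 j2 _ hm
      exact le_refl 0
    · intro i1 i2 j _ hm
      have := mem_yd.mp hm
      have := h0 i2 (Nat.zero_le _)
      omega
    · intro i j _
      rfl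
    · intro i j hm
      have := mem_yd.mp hm
      have := h0 i (Nat.zero_le _)
      omega
    · intro e
      rw [hα e (Nat.zero_le _)]
      unfold content
      rw [hcells, Finset.filter_empty, Finset.card_empty]
  | succ m ih =>
    intro f hf h0 α hα hdom hsum
    set x := α m with hxdef
    have hx1 : x ≤ f 0 := by
      have := hdom {m}
      simpa using this
    have hxm : f m ≤ x := by
      have h1 := hdom (Finset.range m)
      rw [Finset.card_range] at h1
      rw [Finset.sum_range_succ, Finset.sum_range_succ (f := f)] at hsum
      omega
    set f' : ℕ → ℕ := fun j => f j - min x (f j) + min x (f (j + 1)) with hf'def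
    have hf'le : ∀ j, f' j ≤ f j := by
      intro j
      have h1 : min x (f (j + 1)) ≤ min x (f j) :=
        min_le_min (le_refl x) (hf (Nat.le_succ j))
      have h2 : min x (f j) ≤ f j := min_le_right _ _
      simp only [hf'def]
      omega
    have hf'ge : ∀ j, f (j + 1) ≤ f' j := by
      intro j
      have hab : f (j + 1) ≤ f j := hf (Nat.le_succ j)
      rcases le_total x (f (j + 1)) with h | h
      · have h2 : min x (f (j+1)) = x := min_eq_left h
        have h3 : min x (f j) = x := min_eq_left (le_trans h hab)
        simp only [hf'def]; omega
      · have h2 : min x (f (j + 1)) = f (j + 1) := min_eq_right h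
        rcases le_total x (f j) with h4 | h4
        · have h5 : min x (f j) = x := min_eq_left h4
          simp only [hf'def]; omega
        · have h5 : min x (f j) = f j := min_eq_right h4
          simp only [hf'def]; omega
    have hf'anti : Antitone f' := antitone_nat_of_succ_le fun j =>
      le_trans (hf'le (j + 1)) (le_trans (hf (le_refl (j + 1))) (hf'ge j))
    have h0' : ∀ i, m ≤ i → f' i = 0 := by
      intro i hi
      have h1 : f i ≤ x := le_trans (hf hi) hxm
      have h2 : f (i + 1) = 0 := h0 (i + 1) (by omega)
      have h3 : min x (f i) = f i := min_eq_right h1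
      simp only [hf'def, h2]
      omega
    set α' : ℕ → ℕ := Function.update α m 0 with hα'def
    have hα'eq : ∀ i, i ≠ m → α' i = α i := fun i hi => Function.update_of_ne hi _ _
    have hα'm : α' m = 0 := Function.update_self _ _ _
    have hα' : ∀ i, m ≤ i → α' i = 0 := by
      intro i hi
      rcases eq_or_lt_of_le hi with h | h
      · rw [← h, hα'm]
      · rw [hα'eq i (by omega)]; exact hα i (by omega)
    have hS' : ∀ k, ∑ r ∈ Finset.range k, f' r + x = ∑ r ∈ Finset.range k, f r + min x (f k) := by
      intro k
      have h := sum_f' x f k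
      rw [min_eq_left hx1] at h
      simpa [hf'def] using h
    have hof : ∑ i ∈ Finset.range m, α' i = ∑ i ∈ Finset.range m, α i :=
      Finset.sum_congr rfl fun i hi => hα'eq i (by have := Finset.mem_range.mp hi; omega)
    have hsum' : ∑ i ∈ Finset.range m, α' i = ∑ i ∈ Finset.range m, f' i := by
      have h2 := hS' m
      rw [min_eq_right hxm] at h2
      rw [Finset.sum_range_succ, Finset.sum_range_succ (f := f)] at hsum
      omega
    have hdom' : ∀ S : Finset ℕ, ∑ i ∈ S, α' i ≤ ∑ r ∈ Finset.range S.card, f' r := by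
      intro S
      classical
      set S' := S.erase m with hS'def
      have hcard : S'.card ≤ S.card := Finset.card_le_card (Finset.erase_subset _ _)
      have hmem : m ∉ S' := Finset.notMem_erase _ _
      have h1 : ∑ i ∈ S, α' i = ∑ i ∈ S', α i := by
        rw [← Finset.sum_erase S (f := α') (a := m) (by rw [hα'm])]
        exact Finset.sum_congr rfl fun i hi => hα'eq i (Finset.ne_of_mem_erase hi)
      have hmono : ∑ r ∈ Finset.range S'.card, f' r ≤ ∑ r ∈ Finset.range S.card, f' r :=
        Finset.sum_le_sum_of_subset (Finset.range_subset_range.mpr hcard)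
      have hk := hS' S'.card
      rcases le_total x (f S'.card) with hc | hc
      · rw [min_eq_left hc] at hk
        have hd := hdom S'
        omega
      · rw [min_eq_right hc] at hk
        have hd := hdom (insert m S')
        rw [Finset.sum_insert hmem, Finset.card_insert_of_notMem hmem,
          Finset.sum_range_succ] at hd
        omega
    obtain ⟨T', hT'lt, hT'c⟩ := ih f' hf'anti h0' α' hα' hdom' hsum'
    have memD : ∀ i j : ℕ, ((i, j) ∈ yd f hf (m + 1) h0) ↔ j < f i := fun i j => mem_yd
    have memD' : ∀ i j : ℕ, ((i, j) ∈ yd f' hf'anti m h0') ↔ j < f' i := fun i j => mem_yd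
    set E : ℕ → ℕ → ℕ := fun i j => if j < f' i then T' i j else if j < f i then m else 0
      with hEdef
    have hEval1 : ∀ i j, j < f' i → E i j = T' i j := by
      intro i j h; simp only [hEdef]; rw [if_pos h]
    have hEval2 : ∀ i j, ¬ j < f' i → j < f i → E i j = m := by
      intro i j h1 h2; simp only [hEdef]; rw [if_neg h1, if_pos h2]
    have hEval3 : ∀ i j, ¬ j < f i → E i j = 0 := by
      intro i j h1
      have h2 : ¬ j < f' i := fun hh => h1 (lt_of_lt_of_le hh (hf'le i))
      simp only [hEdef]; rw [if_neg h2, if_neg h1]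
    have hEltm : ∀ i j, j < f i → E i j < m + 1 := by
      intro i j h
      by_cases h1 : j < f' i
      · rw [hEval1 i j h1]
        exact lt_trans (hT'lt i j ((memD' i j).mpr h1)) (Nat.lt_succ_self m)
      · rw [hEval2 i j h1 h]; omega
    have hrow : ∀ {i j1 j2 : ℕ}, j1 < j2 → (i, j2) ∈ yd f hf (m + 1) h0 → E i j1 ≤ E i j2 := by
      intro i j1 j2 hj hm2
      have hj2 : j2 < f i := (memD i j2).mp hm2
      by_cases h2 : j2 < f' i
      · have h1 : j1 < f' i := by omega
        rw [hEval1 i j1 h1, hEval1 i j2 h2]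
        exact T'.row_weak hj ((memD' i j2).mpr h2)
      · rw [hEval2 i j2 h2 hj2]
        by_cases h1 : j1 < f' i
        · rw [hEval1 i j1 h1]
          exact le_of_lt (hT'lt i j1 ((memD' i j1).mpr h1))
        · rw [hEval2 i j1 h1 (by omega)]
    have hcol : ∀ {i1 i2 j : ℕ}, i1 < i2 → (i2, j) ∈ yd f hf (m + 1) h0 → E i1 j < E i2 j := by
      intro i1 i2 j hi hm2
      have hj2 : j < f i2 := (memD i2 j).mp hm2
      by_cases h2 : j < f' i2
      · have h1 : j < f' i1 := lt_of_lt_of_le h2 (hf'anti (le_of_lt hi))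
        rw [hEval1 i1 j h1, hEval1 i2 j h2]
        exact T'.col_strict hi ((memD' i2 j).mpr h2)
      · rw [hEval2 i2 j h2 hj2]
        have h1 : j < f' i1 := by
          have ha : f i2 ≤ f (i1 + 1) := hf hi
          have hb := hf'ge i1
          omega
        rw [hEval1 i1 j h1]
        exact hT'lt i1 j ((memD' i1 j).mpr h1)
    have hzero : ∀ {i j : ℕ}, (i, j) ∉ yd f hf (m + 1) h0 → E i j = 0 := by
      intro i j hm2
      have : ¬ j < f i := fun hh => hm2 ((memD i j).mpr hh)
      exact hEval3 i j this
    refine ⟨⟨E, hrow, hcol, hzero⟩, ?_, ?_⟩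
    · intro i j hm2
      exact hEltm i j ((memD i j).mp hm2)
    · intro e
      have hcoe : ∀ c : ℕ × ℕ,
          ((⟨E, hrow, hcol, hzero⟩ : SemistandardYoungTableau (yd f hf (m + 1) h0)) : ℕ → ℕ → ℕ)
            c.1 c.2 = E c.1 c.2 := fun _ => rfl
      unfold content
      simp only [hcoe]
      by_cases he : e = m
      · rw [he]
        have hfilters : ((yd f hf (m + 1) h0).cells.filter fun c => E c.1 c.2 = m) =
            (yd f hf (m + 1) h0).cells \ (yd f' hf'anti m h0').cells := by
          ext ⟨i, j⟩
          simp only [Finset.mem_filter, Finset.mem_sdiff, YoungDiagram.mem_cells]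
          constructor
          · rintro ⟨hc, hE⟩
            refine ⟨hc, fun hc' => ?_⟩
            have h1 : j < f' i := (memD' i j).mp hc'
            rw [hEval1 i j h1] at hE
            exact absurd (hE ▸ hT'lt i j ((memD' i j).mpr h1)) (lt_irrefl _)
          · rintro ⟨hc, hc'⟩
            have h1 : j < f i := (memD i j).mp hc
            have h2 : ¬ j < f' i := fun hh => hc' ((memD' i j).mpr hh)
            exact ⟨hc, hEval2 i j h2 h1⟩
        have hsub : (yd f' hf'anti m h0').cells ⊆ (yd f hf (m + 1) h0).cells := by
          rintro ⟨i, j⟩ hc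
          have h1 : j < f' i := (memD' i j).mp ((YoungDiagram.mem_cells _).mp hc)
          exact (YoungDiagram.mem_cells _).mpr ((memD i j).mpr (lt_of_lt_of_le h1 (hf'le i)))
        rw [hfilters, Finset.card_sdiff_of_subset hsub, card_yd, card_yd]
        have e1 : ∑ i ∈ Finset.range m, f' i = ∑ i ∈ Finset.range m, α i := by omega
        have e2 : ∑ i ∈ Finset.range (m + 1), f i = ∑ i ∈ Finset.range m, f i + f m :=
          Finset.sum_range_succ _ _
        rw [Finset.sum_range_succ, Finset.sum_range_succ (f := f)] at hsum
        omega
      · have hfilters : ((yd f hf (m + 1) h0).cells.filter fun c => E c.1 c.2 = e) =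
            ((yd f' hf'anti m h0').cells.filter fun c => T' c.1 c.2 = e) := by
          ext ⟨i, j⟩
          simp only [Finset.mem_filter, YoungDiagram.mem_cells]
          constructor
          · rintro ⟨hc, hE⟩
            have h1 : j < f i := (memD i j).mp hc
            by_cases h2 : j < f' i
            · rw [hEval1 i j h2] at hE
              exact ⟨(memD' i j).mpr h2, hE⟩
            · rw [hEval2 i j h2 h1] at hE
              exact absurd hE.symm he
          · rintro ⟨hc, hT⟩
            have h1 : j < f' i := (memD' i j).mp hc
            refine ⟨(memD i j).mpr (lt_of_lt_of_le h1 (hf'le i)), ?_⟩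
            rw [hEval1 i j h1]; exact hT
        have := hT'c e
        unfold content at this
        rw [hfilters, this, hα'eq e he]


def ext0 {m : ℕ} (g : Fin m → ℕ) : ℕ → ℕ := fun i => if h : i < m then g ⟨i, h⟩ else 0

theorem ext0_anti {m : ℕ} {g : Fin m → ℕ} (hg : Antitone g) : Antitone (ext0 g) := by
  intro i j hij
  unfold ext0
  by_cases hj : j < m
  · have hi : i < m := lt_of_le_of_lt hij hj
    rw [dif_pos hi, dif_pos hj]
    exact hg (by exact hij)
  · rw [dif_neg hj]
    exact Nat.zero_le _

theorem ext0_zero {m : ℕ} (g : Fin m → ℕ) : ∀ i, m ≤ i → ext0 g i = 0 := by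
  intro i hi
  unfold ext0
  rw [dif_neg (by omega)]

theorem ext0_apply {m : ℕ} (g : Fin m → ℕ) (k : Fin m) : ext0 g (k : ℕ) = g k := by
  unfold ext0
  rw [dif_pos k.isLt]

theorem sum_ext0 {m : ℕ} (g : Fin m → ℕ) :
    ∑ i ∈ Finset.range m, ext0 g i = ∑ k : Fin m, g k := by
  rw [← Fin.sum_univ_eq_sum_range]
  exact Finset.sum_congr rfl fun k _ => ext0_apply g k

theorem mem_diagramOf {m : ℕ} {μ : Fin m → ℕ} {hμ : Antitone μ} {i j : ℕ} :
    (i, j) ∈ diagramOf μ hμ ↔ j < ext0 μ i := by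
  constructor
  · intro h
    obtain ⟨i', -, h2⟩ := Finset.mem_biUnion.mp h
    obtain ⟨j', hj', h3⟩ := Finset.mem_image.mp h2
    injection h3 with h4 h5
    subst h4; subst h5
    rw [ext0_apply]
    exact Finset.mem_range.mp hj'
  · intro h
    unfold ext0 at h
    by_cases hi : i < m
    · rw [dif_pos hi] at h
      refine Finset.mem_biUnion.mpr ⟨⟨i, hi⟩, Finset.mem_univ _, ?_⟩
      exact Finset.mem_image.mpr ⟨j, Finset.mem_range.mpr h, rfl⟩
    · rw [dif_neg hi] at h
      omega

theorem bridge {m : ℕ} (μ : Fin m → ℕ) (hμ : Antitone μ) :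
    diagramOf μ hμ = yd (ext0 μ) (ext0_anti hμ) m (ext0_zero μ) := by
  apply YoungDiagram.ext
  ext ⟨i, j⟩
  rw [YoungDiagram.mem_cells, YoungDiagram.mem_cells]
  rw [mem_diagramOf, mem_yd]

theorem finite_ssyt (D : YoungDiagram) (m : ℕ) (P : SemistandardYoungTableau D → Prop) :
    Finite {T : SemistandardYoungTableau D // (∀ i j : ℕ, (i, j) ∈ D → T i j < m) ∧ P T} := by
  classical
  refine Finite.of_injective (β := D.cells → Fin m)
    (fun T c => ⟨T.1 c.1.1 c.1.2,
      T.2.1 c.1.1 c.1.2 (by rw [Prod.mk.eta]; exact (YoungDiagram.mem_cells _).mp c.2)⟩) ?_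
  intro T1 T2 h
  apply Subtype.ext
  apply SemistandardYoungTableau.ext
  intro i j
  by_cases hm : (i, j) ∈ D
  · have := congrFun h ⟨(i, j), hm⟩
    exact congrArg Fin.val this
  · rw [T1.1.zeros hm, T2.1.zeros hm]

theorem schurCoeff_ne_zero_iff {m : ℕ} (μ : Fin m → ℕ) (hμ : Antitone μ) (α : Fin m → ℕ) :
    schurCoeff m (diagramOf μ hμ) α ≠ 0 ↔
      ((∑ k, α k) = (∑ k, μ k) ∧
        ∀ S : Finset (Fin m), ∑ i ∈ S, α i ≤ ∑ r ∈ Finset.range S.card, ext0 μ r) := by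
  classical
  have hrow : ∀ r, (diagramOf μ hμ).rowLen r = ext0 μ r := by
    intro r; rw [bridge μ hμ]; exact rowLen_yd r
  have hcard : (diagramOf μ hμ).cells.card = ∑ k, μ k := by
    rw [bridge μ hμ, card_yd, sum_ext0]
  constructor
  · intro h
    obtain ⟨⟨T, hTlt, hTc⟩⟩ := (Nat.card_ne_zero.mp h).1
    have hfull : ((diagramOf μ hμ).cells.filter
        fun c => T c.1 c.2 ∈ Finset.range m) = (diagramOf μ hμ).cells := by
      apply Finset.filter_true_of_mem
      rintro ⟨i, j⟩ hc
      exact Finset.mem_range.mpr (hTlt i j hc)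
    constructor
    · calc (∑ k, α k) = ∑ k : Fin m, content (diagramOf μ hμ) T (k : ℕ) :=
            (Finset.sum_congr rfl fun k _ => (hTc k).symm)
        _ = ∑ e ∈ Finset.range m, content (diagramOf μ hμ) T e :=
            Fin.sum_univ_eq_sum_range _ _
        _ = ((diagramOf μ hμ).cells.filter fun c => T c.1 c.2 ∈ Finset.range m).card :=
            content_sum _ _ _
        _ = (diagramOf μ hμ).cells.card := by rw [hfull]
        _ = ∑ k, μ k := hcard
    · intro S
      set SN : Finset ℕ := S.image (fun k : Fin m => (k : ℕ)) with hSN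
      have hcardSN : SN.card = S.card := Finset.card_image_of_injective _ Fin.val_injective
      calc ∑ i ∈ S, α i = ∑ i ∈ S, content (diagramOf μ hμ) T (i : ℕ) :=
            Finset.sum_congr rfl fun k _ => (hTc k).symm
        _ = ∑ e ∈ SN, content (diagramOf μ hμ) T e :=
            (Finset.sum_image (fun a _ b _ hab => Fin.val_injective hab)).symm
        _ ≤ ∑ r ∈ Finset.range SN.card, (diagramOf μ hμ).rowLen r := dom_of_ssyt _ _ _
        _ = ∑ r ∈ Finset.range S.card, ext0 μ r := by
            rw [hcardSN]; exact Finset.sum_congr rfl fun r _ => hrow r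
  · rintro ⟨hsum, hdom⟩
    unfold schurCoeff
    rw [Nat.card_ne_zero]
    constructor
    · -- nonempty
      have hdom' : ∀ S : Finset ℕ,
          ∑ i ∈ S, ext0 α i ≤ ∑ r ∈ Finset.range S.card, ext0 μ r := by
        intro S
        have hstep1 : ∑ i ∈ S, ext0 α i = ∑ i ∈ S.filter (· < m), ext0 α i := by
          rw [← Finset.sum_filter_add_sum_filter_not S (· < m)]
          have : ∑ i ∈ S.filter (fun i => ¬ i < m), ext0 α i = 0 := by
            apply Finset.sum_eq_zero
            intro i hi
            exact ext0_zero α i (le_of_not_gt (Finset.mem_filter.mp hi).2)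
          omega
        set Sf : Finset (Fin m) := (S.filter (· < m)).attachFin
          (fun a ha => (Finset.mem_filter.mp ha).2) with hSf
        have hstep2 : ∑ i ∈ S.filter (· < m), ext0 α i = ∑ k ∈ Sf, α k := by
          rw [hSf]
          refine (Finset.sum_bij (i := fun (k : Fin m) _ => (k : ℕ)) ?_ ?_ ?_ ?_).symm
          · intro k hk
            exact (Finset.mem_attachFin _).mp hk
          · intro k1 _ k2 _ h
            exact Fin.val_injective h
          · intro i hi
            exact ⟨⟨i, (Finset.mem_filter.mp hi).2⟩, (Finset.mem_attachFin _).mpr hi, rfl⟩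
          · intro k _
            exact (ext0_apply α k).symm
        have hcardSf : Sf.card = (S.filter (· < m)).card := Finset.card_attachFin _ _
        have hcardle : (S.filter (· < m)).card ≤ S.card :=
          Finset.card_le_card (Finset.filter_subset _ _)
        have h1 := hdom Sf
        have h2 : ∑ r ∈ Finset.range Sf.card, ext0 μ r ≤
            ∑ r ∈ Finset.range S.card, ext0 μ r :=
          Finset.sum_le_sum_of_subset (Finset.range_subset_range.mpr (by omega))
        omega
      have hsum' : ∑ i ∈ Finset.range m, ext0 α i = ∑ i ∈ Finset.range m, ext0 μ i := by
        rw [sum_ext0, sum_ext0]; exact hsum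
      obtain ⟨T, hTlt, hTc⟩ := exists_ssyt m (ext0 μ) (ext0_anti hμ) (ext0_zero μ)
        (ext0 α) (ext0_zero α) hdom' hsum'
      rw [bridge μ hμ]
      refine ⟨T, hTlt, fun k => ?_⟩
      rw [hTc (k : ℕ), ext0_apply]
    · rw [bridge μ hμ]
      exact finite_ssyt _ m _



theorem addBox_self {m : ℕ} (ν : Fin m → ℕ) (t : Fin m) : AddBoxAt ν t t = ν t + 1 :=
  Function.update_self _ _ _

theorem addBox_other {m : ℕ} (ν : Fin m → ℕ) (t s : Fin m) (hs : s ≠ t) :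
    AddBoxAt ν t s = ν s :=
  Function.update_of_ne hs _ _

theorem sum_addBox {m : ℕ} (ν : Fin m → ℕ) (t : Fin m) :
    ∑ k, AddBoxAt ν t k = (∑ k, ν k) + 1 := by
  unfold AddBoxAt
  rw [Finset.sum_update_of_mem (Finset.mem_univ t)]
  rw [← Finset.add_sum_erase _ ν (Finset.mem_univ t), Finset.erase_eq]
  omega

theorem ext0_addBox {m : ℕ} (ν : Fin m → ℕ) (t : Fin m) (j : ℕ) :
    ext0 (AddBoxAt ν t) j = ext0 ν j + (if j = (t : ℕ) then 1 else 0) := by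
  unfold ext0 AddBoxAt
  by_cases hj : j < m
  · rw [dif_pos hj, dif_pos hj]
    by_cases he : j = (t : ℕ)
    · have h2 : (⟨j, hj⟩ : Fin m) = t := Fin.ext he
      rw [if_pos he, h2, Function.update_self]
    · have h2 : (⟨j, hj⟩ : Fin m) ≠ t := fun hh => he (congrArg Fin.val hh)
      rw [if_neg he, Function.update_of_ne h2]
      exact (Nat.add_zero _).symm
  · have : j ≠ (t : ℕ) := by have := t.isLt; omega
    rw [dif_neg hj, dif_neg hj, if_neg this]

theorem le_addBox {m : ℕ} (ν : Fin m → ℕ) (t : Fin m) : ν ≤ AddBoxAt ν t := by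
  intro s
  by_cases hs : s = t
  · subst hs; rw [addBox_self]; exact Nat.le_succ _
  · rw [addBox_other _ _ _ hs]

/-- characterization of admissibility of adding a box at `t`. -/
theorem admC {m : ℕ} (β ν : Fin m → ℕ) (t : Fin m) (hν : Antitone ν) (hβ : ν ≤ β) :
    (Antitone (AddBoxAt ν t) ∧ AddBoxAt ν t ≤ β) ↔
      ((∀ s : Fin m, s < t → ν t < ν s) ∧ ν t < β t) := by
  constructor
  · rintro ⟨h1, h2⟩
    constructor
    · intro s hs
      have h3 : ν s ≥ ν t + 1 := by
        have := h1 (le_of_lt hs)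
        rwa [addBox_self, addBox_other _ _ _ (ne_of_lt hs)] at this
      omega
    · have h3 : ν t + 1 ≤ β t := by
        have := h2 t
        rwa [addBox_self] at this
      omega
  · rintro ⟨h1, h2⟩
    constructor
    · intro a b hab
      by_cases hb : b = t
      · subst hb
        rw [addBox_self]
        rcases eq_or_lt_of_le hab with h | h
        · rw [h, addBox_self]
        · rw [addBox_other _ _ _ (ne_of_lt h)]
          exact h1 a h
      · rw [addBox_other _ _ _ hb]
        by_cases ha : a = t
        · subst ha
          rw [addBox_self]
          have := hν hab
          omega
        · rw [addBox_other _ _ _ ha]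
          exact hν hab
    · intro s
      by_cases hs : s = t
      · subst hs; rw [addBox_self]; exact h2
      · rw [addBox_other _ _ _ hs]; exact hβ s


def Skk {m : ℕ} (lam : ℕ → Fin m → ℕ) (i k : ℕ) : ℕ := ∑ r ∈ Finset.range k, ext0 (lam i) r

theorem Skk_step {m : ℕ} {lam : ℕ → Fin m → ℕ} {i : ℕ} {t : Fin m}
    (hEq : lam (i + 1) = AddBoxAt (lam i) t) (k : ℕ) :
    Skk lam (i + 1) k = Skk lam i k + (if (t : ℕ) < k then 1 else 0) := by
  unfold Skk
  rw [hEq]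
  rw [Finset.sum_congr rfl fun j _ => ext0_addBox (lam i) t j, Finset.sum_add_distrib,
    Finset.sum_ite_eq' (Finset.range k) ((t : ℕ)) (fun _ => 1)]
  simp only [Finset.mem_range]

theorem lam_mono {m l : ℕ} {lam : ℕ → Fin m → ℕ}
    (hstep' : ∀ i, i < l → ∃ t, lam (i + 1) = AddBoxAt (lam i) t) :
    ∀ d i, i + d ≤ l → lam i ≤ lam (i + d) := by
  intro d
  induction d with
  | zero => intro i _; exact le_refl _
  | succ d ih =>
    intro i h
    obtain ⟨t, ht⟩ := hstep' (i + d) (by omega)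
    calc lam i ≤ lam (i + d) := ih i (by omega)
      _ ≤ lam (i + d + 1) := by rw [ht]; exact le_addBox _ _

theorem rows_mono {m l : ℕ} {lam : ℕ → Fin m → ℕ} {r : ℕ → Fin m}
    (hanti : ∀ i ≤ l, Antitone (lam i))
    (hr : ∀ i, i < l → (lam (i + 1) = AddBoxAt (lam i) (r i) ∧
      ∀ r' : Fin m, r' < r i →
        ¬ (Antitone (AddBoxAt (lam i) r') ∧ AddBoxAt (lam i) r' ≤ lam l)))
    (k : ℕ) :
    ∀ i i', i ≤ i' → i' < l → ((r i' : ℕ) < k) → (i < l) → ((r i : ℕ) < k) := by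
  intro i i' hii' hi'l hk hil
  by_contra hni
  push_neg at hni
  have hM : ∀ a b, a ≤ b → b ≤ l → lam a ≤ lam b := by
    intro a b hab hbl
    have := lam_mono (lam := lam) (l := l) (fun p hp => ⟨r p, (hr p hp).1⟩) (b - a) a (by omega)
    rwa [show a + (b - a) = b from by omega] at this
  have inv : ∀ d, i + d ≤ l →
      ((∀ t : Fin m, (t : ℕ) < k → lam (i + d) t = lam i t) ∧
        (i + d < l → k ≤ (r (i + d) : ℕ))) := by
    intro d
    induction d with
    | zero => exact fun _ => ⟨fun _ _ => rfl, fun _ => hni⟩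
    | succ d ihd =>
      intro h
      have hd := ihd (by omega)
      have hdl : i + d < l := by omega
      have hkr : k ≤ (r (i + d) : ℕ) := hd.2 hdl
      have hrow : ∀ t : Fin m, (t : ℕ) < k → lam (i + d + 1) t = lam i t := by
        intro t ht
        have hne : t ≠ r (i + d) := by
          intro hh; have := congrArg Fin.val hh; omega
        rw [show i + (d + 1) = i + d + 1 from rfl] at *
        rw [(hr (i + d) hdl).1, addBox_other _ _ _ hne, hd.1 t ht]
      refine ⟨by exact hrow, ?_⟩
      intro hsl
      by_contra hlt
      push_neg at hlt
      set t0 := r (i + d + 1) with ht0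
      have hlt' : (t0 : ℕ) < k := hlt
      have hAdm1 : Antitone (AddBoxAt (lam (i + d + 1)) t0) ∧
          AddBoxAt (lam (i + d + 1)) t0 ≤ lam l := by
        have h1 := (hr (i + d + 1) hsl).1
        exact ⟨by rw [← h1]; exact hanti (i + d + 1 + 1) (by omega),
          by rw [← h1]; exact hM (i + d + 1 + 1) l (by omega) (le_refl l)⟩
      have hν1anti : Antitone (lam (i + d + 1)) := hanti _ (by omega)
      have hν1β : lam (i + d + 1) ≤ lam l := hM _ _ (by omega) (le_refl _)
      obtain ⟨hc1, hc2⟩ := (admC (lam l) (lam (i + d + 1)) t0 hν1anti hν1β).mp hAdm1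
      have hsame : ∀ s : Fin m, (s : ℕ) < k → lam (i + d + 1) s = lam (i + d) s := by
        intro s hs
        have hne : s ≠ r (i + d) := by
          intro hh; have := congrArg Fin.val hh; omega
        rw [(hr (i + d) hdl).1, addBox_other _ _ _ hne]
      have hc1' : ∀ s : Fin m, s < t0 → lam (i + d) t0 < lam (i + d) s := by
        intro s hs
        have hsk : (s : ℕ) < k := by
          have := Fin.lt_def.mp hs; omega
        rw [← hsame s hsk, ← hsame t0 hlt']
        exact hc1 s hs
      have hc2' : lam (i + d) t0 < lam l t0 := by
        rw [← hsame t0 hlt']; exact hc2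
      have hAdm0 := (admC (lam l) (lam (i + d)) t0 (hanti _ (by omega))
        (hM _ _ (by omega) (le_refl _))).mpr ⟨hc1', hc2'⟩
      have ht0lt : t0 < r (i + d) := by
        rw [Fin.lt_def]; omega
      exact (hr (i + d) hdl).2 t0 ht0lt hAdm0
  have hfin := (inv (i' - i) (by omega)).2
  rw [show i + (i' - i) = i' from by omega] at hfin
  exact absurd hk (not_lt.mpr (hfin hi'l))

theorem chain_key {m l : ℕ} {lam : ℕ → Fin m → ℕ}
    (hanti : ∀ i ≤ l, Antitone (lam i))
    (hstep : ∀ i < l, NorthmostStep (lam l) (lam i) (lam (i + 1)))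
    (k : ℕ) (i : ℕ) (hi : i ≤ l) :
    ∃ δ : ℤ, ∀ j ≤ l, (Skk lam j k : ℤ) ≤ (Skk lam i k : ℤ) + ((j : ℤ) - (i : ℤ)) * δ := by
  classical
  rcases Nat.eq_zero_or_pos l with hl | hl
  · subst hl
    refine ⟨0, fun j hj => ?_⟩
    have hj0 : j = 0 := by omega
    have hi0 : i = 0 := by omega
    subst hj0; subst hi0
    simp
  · have htot : ∀ p, ∃ t : Fin m, p < l → (lam (p + 1) = AddBoxAt (lam p) t ∧
        ∀ r' : Fin m, r' < t →
          ¬ (Antitone (AddBoxAt (lam p) r') ∧ AddBoxAt (lam p) r' ≤ lam l)) := by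
      intro p
      by_cases hp : p < l
      · obtain ⟨t, h1, _, _, h4⟩ := hstep p hp
        exact ⟨t, fun _ => ⟨h1, h4⟩⟩
      · obtain ⟨t, _, _, _, _⟩ := hstep 0 hl
        exact ⟨t, fun hc => absurd hc hp⟩
    choose r hr using htot
    set incN : ℕ → ℕ := fun p => if (r p : ℕ) < k then 1 else 0 with hincN
    have hSkkstep : ∀ p, p < l → Skk lam (p + 1) k = Skk lam p k + incN p := by
      intro p hp
      exact Skk_step (hr p hp).1 k
    have hmono : ∀ p q, p ≤ q → q < l → incN q ≤ incN p := by
      intro p q hpq hql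
      simp only [hincN]
      by_cases hq : (r q : ℕ) < k
      · have hp := rows_mono hanti (fun a ha => (hr a ha)) k p q hpq hql hq (by omega)
        rw [if_pos hq, if_pos hp]
      · rw [if_neg hq]
        exact Nat.zero_le _
    have tele : ∀ a d, a + d ≤ l →
        Skk lam (a + d) k = Skk lam a k + ∑ p ∈ Finset.range d, incN (a + p) := by
      intro a d
      induction d with
      | zero => intro _; simp
      | succ d ih =>
        intro h
        rw [show a + (d + 1) = (a + d) + 1 from rfl, hSkkstep (a + d) (by omega),
          ih (by omega), Finset.sum_range_succ]
        omega
    set δN : ℕ := if i < l then incN i else if 0 < i then incN (i - 1) else 0 with hδN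
    refine ⟨(δN : ℤ), ?_⟩
    intro j hj
    rcases le_or_gt i j with hij | hij
    · -- j ≥ i
      rcases eq_or_lt_of_le hij with he | hlt
      · subst he; simp
      · have hil : i < l := by omega
        have hδ : δN = incN i := by rw [hδN, if_pos hil]
        have ht := tele i (j - i) (by omega)
        rw [show i + (j - i) = j from by omega] at ht
        have hbd : ∑ p ∈ Finset.range (j - i), incN (i + p) ≤ (j - i) * δN := by
          calc ∑ p ∈ Finset.range (j - i), incN (i + p)
              ≤ ∑ _p ∈ Finset.range (j - i), δN := by
                refine Finset.sum_le_sum fun p hp => ?_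
                rw [hδ]
                have hpr := Finset.mem_range.mp hp
                exact hmono i (i + p) (by omega) (by omega)
            _ = (j - i) * δN := by rw [Finset.sum_const, Finset.card_range, smul_eq_mul]
        have hcast : ((j : ℤ) - (i : ℤ)) = ((j - i : ℕ) : ℤ) := by omega
        rw [hcast]
        have : Skk lam j k ≤ Skk lam i k + (j - i) * δN := by omega
        exact_mod_cast this
    · -- j < i
      have hipos : 0 < i := by omega
      have ht := tele j (i - j) (by omega)
      rw [show j + (i - j) = i from by omega] at ht
      have hbd : (i - j) * δN ≤ ∑ p ∈ Finset.range (i - j), incN (j + p) := by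
        calc (i - j) * δN = ∑ _p ∈ Finset.range (i - j), δN := by
              rw [Finset.sum_const, Finset.card_range, smul_eq_mul]
          _ ≤ ∑ p ∈ Finset.range (i - j), incN (j + p) := by
              refine Finset.sum_le_sum fun p hp => ?_
              have hpr := Finset.mem_range.mp hp
              rcases Nat.lt_or_ge i l with hil | hil
              · rw [hδN, if_pos hil]
                exact hmono (j + p) i (by omega) hil
              · rw [hδN, if_neg (by omega), if_pos hipos]
                exact hmono (j + p) (i - 1) (by omega) (by omega)
      have h1 : (Skk lam i k : ℤ) = (Skk lam j k : ℤ) +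
          ((∑ p ∈ Finset.range (i - j), incN (j + p) : ℕ) : ℤ) := by exact_mod_cast ht
      have h2 : (((i - j) * δN : ℕ) : ℤ) ≤
          ((∑ p ∈ Finset.range (i - j), incN (j + p) : ℕ) : ℤ) := by exact_mod_cast hbd
      have h3 : ((j : ℤ) - (i : ℤ)) = -(((i - j : ℕ) : ℤ)) := by omega
      rw [h3]
      push_cast at h1 h2 ⊢
      nlinarith [h1, h2]


theorem diagramOf_congr {m : ℕ} {g1 g2 : Fin m → ℕ} (h : g1 = g2) (h1 : Antitone g1)
    (h2 : Antitone g2) : diagramOf g1 h1 = diagramOf g2 h2 := by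
  subst h; rfl

theorem sum_ext0_lt {m : ℕ} (g : Fin m → ℕ) (k : ℕ) (hk : k ≤ m) :
    ∑ r ∈ Finset.range k, ext0 g r =
      ∑ t ∈ Finset.univ.filter (fun t : Fin m => (t : ℕ) < k), g t := by
  refine (Finset.sum_bij (i := fun (t : Fin m) _ => (t : ℕ)) ?_ ?_ ?_ ?_).symm
  · intro t ht
    exact Finset.mem_range.mpr (Finset.mem_filter.mp ht).2
  · intro t1 _ t2 _ h
    exact Fin.val_injective h
  · intro r hr
    have hrk := Finset.mem_range.mp hr
    exact ⟨⟨r, lt_of_lt_of_le hrk hk⟩, Finset.mem_filter.mpr ⟨Finset.mem_univ _, hrk⟩, rfl⟩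
  · intro t _
    exact (ext0_apply g t).symm

theorem dominates_psum {m : ℕ} {a b : Fin m → ℕ} (h : Dominates a b)
    (hsum : (∑ k, a k) = (∑ k, b k)) (k : ℕ) :
    ∑ r ∈ Finset.range k, ext0 a r ≤ ∑ r ∈ Finset.range k, ext0 b r := by
  rcases Nat.eq_zero_or_pos k with hk0 | hk0
  · subst hk0; simp
  rcases le_or_gt k m with hkm | hkm
  · rw [sum_ext0_lt a k hkm, sum_ext0_lt b k hkm]
    have hj0 : k - 1 < m := by omega
    have hfil : (Finset.univ.filter (fun t : Fin m => (t : ℕ) < k)) =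
        (Finset.univ.filter (· ≤ (⟨k - 1, hj0⟩ : Fin m))) := by
      apply Finset.filter_congr
      intro t _
      rw [Fin.le_def]
      show (t : ℕ) < k ↔ (t : ℕ) ≤ k - 1
      omega
    rw [hfil]
    exact h ⟨k - 1, hj0⟩
  · have hext : ∀ (g : Fin m → ℕ), ∑ r ∈ Finset.range k, ext0 g r = ∑ q, g q := by
      intro g
      rw [← Finset.sum_subset (Finset.range_subset_range.mpr (le_of_lt hkm))
        (fun r _ hr => ext0_zero g r (by simpa using hr))]
      exact sum_ext0 g
    rw [hext a, hext b, hsum]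

end SNPaux


theorem good_hasSNP (m l : ℕ) (ι : Type) [Fintype ι]
    (C : ι → ℝ) (hC : ∀ j, C j ≠ 0)
    (μ : ι → Fin m → ℕ) (hμ : ∀ j, Antitone (μ j))
    (F : (Fin m → ℕ) → ℝ)
    (hF : F = fun α => ∑ j, C j * (schurCoeff m (diagramOf (μ j) (hμ j)) α : ℝ))
    -- condition (a)
    (ha : ∀ d : ℕ, {α : Fin m → ℕ | (∑ k, α k) = d ∧ F α ≠ 0} =
      ⋃ j ∈ {j : ι | ∑ k, μ j k = d}, {α | schurCoeff m (diagramOf (μ j) (hμ j)) α ≠ 0})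
    -- condition (b)
    (lam : ℕ → Fin m → ℕ) (hanti : ∀ i ≤ l, Antitone (lam i))
    (hdeg : ∀ j : ι, ∃ i ≤ l, (∑ k, μ j k) = (∑ k, lam i k))
    (happ : ∀ i ≤ l, ∃ j : ι, μ j = lam i)
    (hmax : ∀ i ≤ l, ∀ j : ι, (∑ k, μ j k) = (∑ k, lam i k) → Dominates (μ j) (lam i))
    (hstep : ∀ i < l, NorthmostStep (lam l) (lam i) (lam (i + 1))) :
    HasSNP F := by
  classical
  have hsupp : ∀ α : Fin m → ℕ, F α ≠ 0 → ∃ i, i ≤ l ∧ (∑ k, α k) = (∑ k, lam i k) ∧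
      ∀ S : Finset (Fin m), ∑ q ∈ S, α q ≤ SNPaux.Skk lam i S.card := by
    intro α hFα
    have hmem := (Set.ext_iff.mp (ha (∑ k, α k)) α).mp ⟨rfl, hFα⟩
    simp only [Set.mem_iUnion, Set.mem_setOf_eq] at hmem
    obtain ⟨j, hjdeg, hjne⟩ := hmem
    obtain ⟨hs, hdomS⟩ := (SNPaux.schurCoeff_ne_zero_iff (μ j) (hμ j) α).mp hjne
    obtain ⟨i, hil, hdi⟩ := hdeg j
    refine ⟨i, hil, by rw [hs, hdi], ?_⟩
    intro S
    have hμlam := hmax i hil j hdi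
    have h2 := SNPaux.dominates_psum hμlam hdi S.card
    exact le_trans (hdomS S) h2
  apply Set.Subset.antisymm
  · rintro x ⟨hxN, hxL⟩
    rw [NewtonP, _root_.convexHull_eq] at hxN
    obtain ⟨ι', t, w, z, hw0, hw1, hz, hcm⟩ := hxN
    rw [Finset.centerMass_eq_of_sum_1 _ _ hw1] at hcm
    have hzdata : ∀ a ∈ t, ∃ αa : Fin m → ℕ, F αa ≠ 0 ∧ z a = fun q => (αa q : ℝ) :=
      fun a haa => hz a haa
    choose! A hA1 hA2 using hzdata
    have hidata : ∀ a ∈ t, ∃ i, i ≤ l ∧ (∑ k, A a k) = (∑ k, lam i k) ∧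
        ∀ S : Finset (Fin m), ∑ q ∈ S, A a q ≤ SNPaux.Skk lam i S.card :=
      fun a haa => hsupp (A a) (hA1 a haa)
    choose! I hI using hidata
    have hx : ∀ q : Fin m, x q = ∑ a ∈ t, w a * (A a q : ℝ) := by
      intro q
      rw [← hcm, Finset.sum_apply]
      refine Finset.sum_congr rfl fun a haa => ?_
      rw [Pi.smul_apply, hA2 a haa, smul_eq_mul]
    have hnn : ∀ q, ∃ nq : ℕ, x q = nq := by
      intro q
      obtain ⟨zq, hzq⟩ := hxL q
      have hpos : 0 ≤ x q := by
        rw [hx q]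
        exact Finset.sum_nonneg fun a haa => mul_nonneg (hw0 a haa) (Nat.cast_nonneg _)
      have hzq0 : 0 ≤ zq := by
        rw [hzq] at hpos
        exact_mod_cast hpos
      refine ⟨zq.toNat, ?_⟩
      rw [hzq]
      exact_mod_cast (Int.toNat_of_nonneg hzq0).symm
    choose n hn using hnn
    have hsubsum : ∀ S : Finset (Fin m),
        ((∑ q ∈ S, n q : ℕ) : ℝ) = ∑ a ∈ t, w a * ((∑ q ∈ S, A a q : ℕ) : ℝ) := by
      intro S
      push_cast
      calc ∑ q ∈ S, (n q : ℝ) = ∑ q ∈ S, x q :=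
            Finset.sum_congr rfl fun q _ => (hn q).symm
        _ = ∑ q ∈ S, ∑ a ∈ t, w a * (A a q : ℝ) :=
            Finset.sum_congr rfl fun q _ => hx q
        _ = ∑ a ∈ t, ∑ q ∈ S, w a * (A a q : ℝ) := Finset.sum_comm
        _ = ∑ a ∈ t, w a * ∑ q ∈ S, (A a q : ℝ) :=
            Finset.sum_congr rfl fun a _ => (Finset.mul_sum _ _ _).symm
    set Dg : ℕ → ℕ := fun i => ∑ k, lam i k with hDg
    have hDgstep : ∀ i, i ≤ l → Dg i = Dg 0 + i := by
      intro i
      induction i with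
      | zero => intro _; omega
      | succ i ih =>
        intro hil
        obtain ⟨tt, h1, _, _, _⟩ := hstep i (by omega)
        have h2 : Dg (i + 1) = Dg i + 1 := by
          simp only [hDg]
          rw [h1, SNPaux.sum_addBox]
        rw [h2, ih (by omega)]
        omega
    set dx := ∑ q, n q with hdx0
    have hdx : (dx : ℝ) = ∑ a ∈ t, w a * ((Dg (I a) : ℕ) : ℝ) := by
      rw [hdx0, hsubsum Finset.univ]
      refine Finset.sum_congr rfl fun a haa => ?_
      rw [(hI a haa).2.1]
    have hwlam : ∀ a ∈ t, (Dg 0 : ℝ) ≤ (Dg (I a) : ℝ) ∧ (Dg (I a) : ℝ) ≤ (Dg 0 + l : ℕ) := by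
      intro a haa
      have h1 := hDgstep (I a) (hI a haa).1
      have h2 := (hI a haa).1
      constructor
      · exact_mod_cast by omega
      · exact_mod_cast by omega
    have hlow : (Dg 0 : ℝ) ≤ (dx : ℝ) := by
      rw [hdx]
      calc (Dg 0 : ℝ) = ∑ a ∈ t, w a * (Dg 0 : ℝ) := by
            rw [← Finset.sum_mul, hw1, one_mul]
        _ ≤ ∑ a ∈ t, w a * ((Dg (I a) : ℕ) : ℝ) :=
            Finset.sum_le_sum fun a haa =>
              mul_le_mul_of_nonneg_left ((hwlam a haa).1) (hw0 a haa)
    have hhigh : (dx : ℝ) ≤ ((Dg 0 + l : ℕ) : ℝ) := by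
      rw [hdx]
      calc ∑ a ∈ t, w a * ((Dg (I a) : ℕ) : ℝ)
          ≤ ∑ a ∈ t, w a * ((Dg 0 + l : ℕ) : ℝ) :=
            Finset.sum_le_sum fun a haa =>
              mul_le_mul_of_nonneg_left ((hwlam a haa).2) (hw0 a haa)
        _ = ((Dg 0 + l : ℕ) : ℝ) := by rw [← Finset.sum_mul, hw1, one_mul]
    have hlowN : Dg 0 ≤ dx := by exact_mod_cast hlow
    have hhighN : dx ≤ Dg 0 + l := by exact_mod_cast hhigh
    set istar := dx - Dg 0 with histar
    have histarl : istar ≤ l := by omega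
    have hdxi : dx = Dg istar := by
      rw [hDgstep istar histarl]; omega
    have hIsum : ∑ a ∈ t, w a * ((I a : ℕ) : ℝ) = (istar : ℝ) := by
      have h1 : ∑ a ∈ t, w a * ((Dg (I a) : ℕ) : ℝ) =
          ∑ a ∈ t, (w a * (Dg 0 : ℝ) + w a * ((I a : ℕ) : ℝ)) := by
        refine Finset.sum_congr rfl fun a haa => ?_
        rw [hDgstep (I a) (hI a haa).1]
        push_cast
        ring
      rw [h1, Finset.sum_add_distrib, ← Finset.sum_mul, hw1, one_mul] at hdx
      have h2 : (dx : ℝ) = (Dg 0 : ℝ) + (istar : ℝ) := by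
        rw [hdxi, hDgstep istar histarl]
        push_cast
        ring
      linarith [hdx, h2]
    have hkey : ∀ S : Finset (Fin m), (∑ q ∈ S, n q) ≤ SNPaux.Skk lam istar S.card := by
      intro S
      obtain ⟨δ, hδ⟩ := SNPaux.chain_key hanti hstep S.card istar histarl
      have hR : ((∑ q ∈ S, n q : ℕ) : ℝ) ≤ ((SNPaux.Skk lam istar S.card : ℕ) : ℝ) := by
        rw [hsubsum S]
        have hterm : ∀ a ∈ t, w a * ((∑ q ∈ S, A a q : ℕ) : ℝ) ≤
            w a * (((SNPaux.Skk lam istar S.card : ℕ) : ℝ) +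
              (((I a : ℕ) : ℝ) - (istar : ℝ)) * (δ : ℝ)) := by
          intro a haa
          refine mul_le_mul_of_nonneg_left ?_ (hw0 a haa)
          have h1 : ((∑ q ∈ S, A a q : ℕ) : ℝ) ≤ ((SNPaux.Skk lam (I a) S.card : ℕ) : ℝ) := by
            exact_mod_cast (hI a haa).2.2 S
          have h2 := hδ (I a) (hI a haa).1
          have h2' : ((SNPaux.Skk lam (I a) S.card : ℕ) : ℝ) ≤
              ((SNPaux.Skk lam istar S.card : ℕ) : ℝ) +
                (((I a : ℕ) : ℝ) - (istar : ℝ)) * (δ : ℝ) := by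
            exact_mod_cast h2
          linarith
        calc ∑ a ∈ t, w a * ((∑ q ∈ S, A a q : ℕ) : ℝ)
            ≤ ∑ a ∈ t, w a * (((SNPaux.Skk lam istar S.card : ℕ) : ℝ) +
                (((I a : ℕ) : ℝ) - (istar : ℝ)) * (δ : ℝ)) :=
              Finset.sum_le_sum hterm
          _ = ((SNPaux.Skk lam istar S.card : ℕ) : ℝ) := by
              have hexp : ∀ a ∈ t, w a * (((SNPaux.Skk lam istar S.card : ℕ) : ℝ) +
                  (((I a : ℕ) : ℝ) - (istar : ℝ)) * (δ : ℝ)) =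
                  w a * ((SNPaux.Skk lam istar S.card : ℕ) : ℝ) +
                    (w a * ((I a : ℕ) : ℝ)) * (δ : ℝ) -
                    w a * ((istar : ℝ) * (δ : ℝ)) := by
                intro a _
                ring
              rw [Finset.sum_congr rfl hexp]
              rw [Finset.sum_sub_distrib, Finset.sum_add_distrib, ← Finset.sum_mul,
                ← Finset.sum_mul, ← Finset.sum_mul, hw1, hIsum, one_mul]
              ring
      exact_mod_cast hR
    have htot : (∑ q, n q) = ∑ k, lam istar k := hdxi
    have hco : schurCoeff m (diagramOf (lam istar) (hanti istar histarl)) n ≠ 0 := by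
      refine (SNPaux.schurCoeff_ne_zero_iff (lam istar) (hanti istar histarl) n).mpr
        ⟨htot, fun S => ?_⟩
      exact hkey S
    obtain ⟨j0, hj0⟩ := happ istar histarl
    have hcong : diagramOf (μ j0) (hμ j0) = diagramOf (lam istar) (hanti istar histarl) :=
      SNPaux.diagramOf_congr hj0 _ _
    have hFn : F n ≠ 0 := by
      have hmem : n ∈ ⋃ j ∈ {j : ι | ∑ k, μ j k = ∑ k, lam istar k},
          {α | schurCoeff m (diagramOf (μ j) (hμ j)) α ≠ 0} := by
        simp only [Set.mem_iUnion, Set.mem_setOf_eq]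
        exact ⟨j0, by rw [hj0], by rw [hcong]; exact hco⟩
      exact ((Set.ext_iff.mp (ha (∑ k, lam istar k)) n).mpr hmem).2
    exact ⟨n, hFn, funext fun q => hn q⟩
  · rintro x ⟨α, hα, rfl⟩
    constructor
    · exact subset_convexHull ℝ _ ⟨α, hα, rfl⟩
    · intro q
      exact ⟨(α q : ℤ), by push_cast; rfl⟩
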